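/- Let E¹(t) be a family of bases of J^{-1}(t), orthonormal with respect to g¹_t, let Ē¹ be such a family, and let O(t) be a family of orthogonal matrices with E¹(t) = O(t)Ē¹(t). Then ω((d²/dt²)(OĒ¹), (d²/dt²)(OĒ¹)) = −4ȮOᵀ + O ω(Ë¹, Ë¹) Oᵀ; consequently E¹ satisfies ω(Ë¹, Ë¹) = 0 if and only if O solves Ȯ = (1/4) O ω(Ë¹, Ë¹). -/

import Mathlib

open scoped BigOperators
open Matrix

/-- if `E¹ = O Eb¹` with `O(t)` orthogonal, then
`ω((OEb¹)'', (OEb¹)'') = −4 Ȯ Oᵀ + O ω(Ë̄¹, Ë̄¹) Oᵀ`; consequently `E¹` satisfies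
`ω(Ë¹, Ë¹) = 0` iff `Ȯ = (1/4) O ω(Ë̄¹, Ë̄¹)`.
Here `Eb¹` is a `g¹`-orthonormal family of bases of `J^{-1}(t)`, which is encoded by the
relations `ω(Eb,Eb) = ω(Ė̄,Eb) = ω(Ë̄,Eb) = ω(Ė̄,Ė̄) = 0` and `ω(Ë̄,Ė̄) = I`. -/
theorem stmt2 {V : Type*} [NormedAddCommGroup V] [NormedSpace ℝ V] {k : ℕ}
    (ω : V →ₗ[ℝ] V →ₗ[ℝ] ℝ) (halt : ∀ v, ω v v = 0)
    (Eb D1 D2 : ℝ → Fin k → V)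
    (hEb0 : ∀ s i, HasDerivAt (fun u => Eb u i) (D1 s i) s)
    (hD1 : ∀ s i, HasDerivAt (fun u => D1 u i) (D2 s i) s)
    (O O' O'' : ℝ → Matrix (Fin k) (Fin k) ℝ)
    (hO : ∀ s i j, HasDerivAt (fun u => O u i j) (O' s i j) s)
    (hO' : ∀ s i j, HasDerivAt (fun u => O' u i j) (O'' s i j) s)
    (horth : ∀ s, O s * (O s)ᵀ = 1)
    (hEE : ∀ s i j, ω (Eb s i) (Eb s j) = 0)
    (hE'E : ∀ s i j, ω (D1 s i) (Eb s j) = 0)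
    (hE''E : ∀ s i j, ω (D2 s i) (Eb s j) = 0)
    (hE'E' : ∀ s i j, ω (D1 s i) (D1 s j) = 0)
    (hE''E' : ∀ s i j, ω (D2 s i) (D1 s j) = (if i = j then (1:ℝ) else 0))
    -- the family `E = O Eb` and its first two derivatives
    (E E1 E2 : ℝ → Fin k → V)
    (hE : ∀ s i, E s i = ∑ j, O s i j • Eb s j)
    (hE1 : ∀ s i, HasDerivAt (fun u => E u i) (E1 s i) s)
    (hE2 : ∀ s i, HasDerivAt (fun u => E1 u i) (E2 s i) s) :
    (∀ t i j, ω (E2 t i) (E2 t j) =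
      ((-(4:ℝ)) • (O' t * (O t)ᵀ)
        + O t * (Matrix.of fun a b => ω (D2 t a) (D2 t b)) * (O t)ᵀ) i j)
    ∧ ((∀ t i j, ω (E2 t i) (E2 t j) = 0) ↔
      (∀ t, O' t = (1/4 : ℝ) • (O t * Matrix.of fun a b => ω (D2 t a) (D2 t b)))) := by
  -- antisymmetry of ω
  have hskew : ∀ x y : V, ω x y = - ω y x := by
    intro x y
    have h := halt (x + y)
    simp only [map_add, LinearMap.add_apply, halt, zero_add, add_zero] at h
    linarith
  have hEbD1 : ∀ s i j, ω (Eb s i) (D1 s j) = 0 := by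
    intro s i j; rw [hskew, hE'E]; ring
  have hEbD2 : ∀ s i j, ω (Eb s i) (D2 s j) = 0 := by
    intro s i j; rw [hskew, hE''E]; ring
  have hD1D2 : ∀ s i j, ω (D1 s i) (D2 s j) = -(if j = i then (1:ℝ) else 0) := by
    intro s i j; rw [hskew, hE''E']
  -- first derivative formula
  have hE1eq : ∀ s i, E1 s i = ∑ a, (O s i a • D1 s a + O' s i a • Eb s a) := by
    intro s i
    refine (hE1 s i).unique ?_
    have heq : (fun u => E u i) = fun u => ∑ a, O u i a • Eb u a := funext fun u => hE u i
    rw [heq]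
    exact HasDerivAt.fun_sum (fun a _ => (hO s i a).smul (hEb0 s a))
  -- second derivative formula
  have hE2eq : ∀ s i, E2 s i =
      ∑ a, ((O s i a • D2 s a + O' s i a • D1 s a) + (O' s i a • D1 s a + O'' s i a • Eb s a)) := by
    intro s i
    refine (hE2 s i).unique ?_
    have heq : (fun u => E1 u i) = fun u => ∑ a, (O u i a • D1 u a + O' u i a • Eb u a) :=
      funext fun u => hE1eq u i
    rw [heq]
    exact HasDerivAt.fun_sum (fun a _ => ((hO s i a).smul (hD1 s a)).add ((hO' s i a).smul (hEb0 s a)))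
  -- derivative of orthogonality
  have hOO' : ∀ t i j, (∑ a, (O' t i a * O t j a + O t i a * O' t j a)) = 0 := by
    intro t i j
    have h1 : HasDerivAt (fun u => ∑ a, O u i a * O u j a)
        (∑ a, (O' t i a * O t j a + O t i a * O' t j a)) t :=
      HasDerivAt.fun_sum (fun a _ => (hO t i a).mul (hO t j a))
    have h2 : (fun u => ∑ a, O u i a * O u j a) = fun _ => (1 : Matrix (Fin k) (Fin k) ℝ) i j := by
      funext u
      calc ∑ a, O u i a * O u j a = (O u * (O u)ᵀ) i j := by
            simp [Matrix.mul_apply, Matrix.transpose_apply]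
        _ = (1 : Matrix (Fin k) (Fin k) ℝ) i j := by rw [horth u]
    rw [h2] at h1
    exact h1.unique (hasDerivAt_const _ _)
  have hswap : ∀ t i j, ∑ a, O t i a * O' t j a = - ∑ a, O' t i a * O t j a := by
    intro t i j
    have := hOO' t i j
    rw [Finset.sum_add_distrib] at this
    linarith
  -- the main formula
  have main : ∀ t i j, ω (E2 t i) (E2 t j) =
      ((-(4:ℝ)) • (O' t * (O t)ᵀ)
        + O t * (Matrix.of fun a b => ω (D2 t a) (D2 t b)) * (O t)ᵀ) i j := by
    intro t i j
    rw [hE2eq, hE2eq]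
    simp only [map_sum, map_add, _root_.map_smul, LinearMap.sum_apply, LinearMap.add_apply,
      LinearMap.smul_apply, smul_eq_mul, hEE, hE'E, hE''E, hE'E', hE''E', hEbD1, hEbD2, hD1D2,
      mul_zero, mul_neg, mul_ite, mul_one, add_zero, zero_add, Finset.sum_ite_eq,
      Finset.sum_ite_eq', Finset.mem_univ, if_true, Finset.sum_neg_distrib]
    simp only [Finset.sum_const_zero, mul_zero, add_zero, Matrix.add_apply, Matrix.smul_apply,
      Matrix.mul_apply, Matrix.transpose_apply, Matrix.of_apply, smul_eq_mul, mul_add, mul_neg,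
      Finset.sum_add_distrib, Finset.sum_neg_distrib, Finset.sum_ite_eq, Finset.mem_univ, if_true]
    have hA : ∑ x, O t j x * ∑ y, O t i y * ω (D2 t y) (D2 t x)
        = ∑ x, (∑ y, O t i y * ω (D2 t y) (D2 t x)) * O t j x :=
      Finset.sum_congr rfl fun x _ => mul_comm _ _
    have h1 : ∑ a, O t j a * O' t i a = ∑ a, O' t i a * O t j a :=
      Finset.sum_congr rfl fun a _ => mul_comm _ _
    have h2 : ∑ a, O' t j a * O t i a = - ∑ a, O' t i a * O t j a := by
      have h := hswap t j i
      rw [h1] at h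
      linarith
    rw [hA, h1, h2]
    ring
  refine ⟨main, ?_, ?_⟩
  · intro hz t
    set A : Matrix (Fin k) (Fin k) ℝ := Matrix.of fun a b => ω (D2 t a) (D2 t b) with hA
    have h1 : (-(4:ℝ)) • (O' t * (O t)ᵀ) + O t * A * (O t)ᵀ = 0 := by
      ext i j
      have := (main t i j).symm.trans (hz t i j)
      simpa using this
    have h2 : O' t * (O t)ᵀ = (1/4:ℝ) • (O t * A * (O t)ᵀ) := by
      ext i j
      have h1' := congrFun (congrFun h1 i) j
      simp only [Matrix.add_apply, Matrix.smul_apply, Matrix.zero_apply, smul_eq_mul] at h1' ⊢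
      linarith
    have hOtO : (O t)ᵀ * O t = 1 := mul_eq_one_comm.mp (horth t)
    calc O' t = O' t * ((O t)ᵀ * O t) := by rw [hOtO, Matrix.mul_one]
      _ = (O' t * (O t)ᵀ) * O t := by rw [Matrix.mul_assoc]
      _ = ((1/4:ℝ) • (O t * A * (O t)ᵀ)) * O t := by rw [h2]
      _ = (1/4:ℝ) • (O t * A) := by
          rw [Matrix.smul_mul, Matrix.mul_assoc (O t * A), hOtO, Matrix.mul_one]
  · intro h t i j
    rw [main t i j, h t]
    have : (-(4:ℝ)) • (((1/4:ℝ) • (O t * Matrix.of fun a b => ω (D2 t a) (D2 t b))) * (O t)ᵀ)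
        + O t * (Matrix.of fun a b => ω (D2 t a) (D2 t b)) * (O t)ᵀ = 0 := by
      rw [Matrix.smul_mul, smul_smul]
      norm_num
    rw [this]
    simp
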